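/- Suppose f is a positive probability mass function on {0,...,n}, α_0 = 0 ≤ α_1 ≤ ... ≤ α_n = 1 with α_k ∈ [0,1], g_k = α_{k+1}f_{k+1} + (1−α_k)f_k, and the GLC condition α_{k+1}(1−α_{k+1})f_{k+1}² ≥ α_{k+2}(1−α_k)f_k f_{k+2} holds. Then for all k = 0,...,n-2 (with all relevant quantities positive): f_k·g_{k+1} ≤ f_{k+1}·g_k and f_{k+2}·g_k ≤ f_{k+1}·g_{k+1}. -/

import Mathlib

theorem glc_kmon_score_ineqs (n : ℕ) (f g α : ℕ → ℝ)
    (hfpos : ∀ k ≤ n, 0 < f k)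
    (hfsum : ∑ k ∈ Finset.range (n + 1), f k = 1)
    (hα0 : α 0 = 0) (hαn : α n = 1)
    (hαmem : ∀ k ≤ n, 0 ≤ α k ∧ α k ≤ 1)
    (hαmono : ∀ k, k + 1 ≤ n → α k ≤ α (k + 1))
    (hg : ∀ k, k + 1 ≤ n → g k = α (k + 1) * f (k + 1) + (1 - α k) * f k)
    (hglc : ∀ k, k + 2 ≤ n →
      α (k + 2) * (1 - α k) * f k * f (k + 2) ≤ α (k + 1) * (1 - α (k + 1)) * f (k + 1) ^ 2) :
    ∀ k, k + 2 ≤ n →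
      f k * g (k + 1) ≤ f (k + 1) * g k ∧ f (k + 2) * g k ≤ f (k + 1) * g (k + 1) := by
  -- α k < 1 whenever k + 2 ≤ n
  have hlt1 : ∀ k, k + 2 ≤ n → α k < 1 := by
    intro k hk
    by_contra h
    push_neg at h
    have heq : α k = 1 := le_antisymm (hαmem k (by omega)).2 h
    have key : ∀ j, j ≤ k → α (k - j) = 1 := by
      intro j
      induction j with
      | zero => intro _; simpa using heq
      | succ j ih =>
        intro hj
        have h1 : α (k - j) = 1 := ih (by omega)
        set i := k - (j + 1) with hi
        have hi1 : i + 1 = k - j := by omega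
        have hi2 : i + 2 ≤ n := by omega
        have hglci := hglc i hi2
        have h2 : α (i + 1) = 1 := by rw [hi1]; exact h1
        have h3 : 1 ≤ α (i + 2) := by
          have := hαmono (i + 1) (by omega)
          rwa [h2] at this
        have hfi := hfpos i (by omega)
        have hfi2 := hfpos (i + 2) (by omega)
        have hαi := (hαmem i (by omega)).2
        rw [h2] at hglci
        have : 1 ≤ α i := by
          nlinarith [mul_pos (mul_pos (show (0:ℝ) < α (i + 2) by linarith) hfi) hfi2]
        exact le_antisymm hαi this
    have := key k le_rfl
    simp [hα0] at this
  -- α k > 0 whenever 2 ≤ k ≤ n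
  have hgt0 : ∀ k, 2 ≤ k → k ≤ n → 0 < α k := by
    intro k hk2 hkn
    by_contra h
    push_neg at h
    have heq : α k = 0 := le_antisymm h (hαmem k hkn).1
    have key : ∀ j, k ≤ j → j ≤ n → α j = 0 := by
      intro j hkj
      induction j, hkj using Nat.le_induction with
      | base => intro _; exact heq
      | succ j hkj ih =>
        intro hjn
        have h1 : α j = 0 := ih (by omega)
        obtain ⟨i, rfl⟩ : ∃ i, j = i + 1 := ⟨j - 1, by omega⟩
        have hglci := hglc i (by omega)
        have hαi0 : α i = 0 := by
          have hm := hαmono i (by omega)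
          rw [h1] at hm
          exact le_antisymm hm (hαmem i (by omega)).1
        rw [h1, hαi0] at hglci
        have hfi := hfpos i (by omega)
        have hfi2 := hfpos (i + 2) (by omega)
        have hnn := (hαmem (i + 2) (by omega)).1
        have hle : α (i + 2) ≤ 0 := by nlinarith [mul_pos hfi hfi2]
        exact le_antisymm hle hnn
    have := key n (by omega) le_rfl
    rw [hαn] at this
    linarith
  intro k hk
  have ha := hαmem k (by omega)
  have hb := hαmem (k + 1) (by omega)
  have hc := hαmem (k + 2) (by omega)
  have hab : α k ≤ α (k + 1) := hαmono k (by omega)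
  have hbc : α (k + 1) ≤ α (k + 2) := hαmono (k + 1) (by omega)
  have ha1 : α k < 1 := hlt1 k hk
  have ha1' : (0:ℝ) < 1 - α k := by linarith
  have hc0 : 0 < α (k + 2) := hgt0 (k + 2) (by omega) hk
  have hx := hfpos k (by omega)
  have hy := hfpos (k + 1) (by omega)
  have hz := hfpos (k + 2) (by omega)
  have hG := hglc k hk
  have hgk := hg k (by omega)
  have hgk1 := hg (k + 1) (by omega)
  have h12 : k + 1 + 1 = k + 2 := rfl
  rw [h12] at hgk1
  constructor
  · rw [hgk, hgk1]
    nlinarith [hG, ha1',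
      mul_nonneg (mul_nonneg hb.1 (sub_nonneg.2 hab)) (sq_nonneg (f (k + 1))),
      mul_nonneg (mul_nonneg (sub_nonneg.2 hab) ha1'.le) (mul_pos hx hy).le]
  · rw [hgk, hgk1]
    nlinarith [hG, hc0,
      mul_nonneg (mul_nonneg (sub_nonneg.2 hbc) (sub_nonneg.2 hb.2)) (sq_nonneg (f (k + 1))),
      mul_nonneg (mul_nonneg (sub_nonneg.2 hbc) hy.le) hz.le,
      mul_nonneg (mul_nonneg (sub_nonneg.2 hbc) hc0.le) (mul_pos hy hz).le]
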